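/- (Abel-type identity, case (p,q) = (−1,−1)) For every integer n ≥ 1 and all real numbers x₁, x₂: (x₁+x₂)·(x₁+x₂+n)^{n−1} = x₂·(x₂+n)^{n−1} + x₁·(x₁+n)^{n−1} + ∑_{k=1}^{n−1} C(n,k) · x₁·x₂ · (x₁+k)^{k−1} · (x₂+n−k)^{n−k−1}, where C(n,k) denotes the binomial coefficient. -/

import Mathlib

open Finset fwdDiff

lemma L1 (d : ℕ) : ∀ m : ℕ, d < m → (fwdDiff (1:ℝ))^[m] (fun t : ℝ => t ^ d) = 0 := by
  induction d using Nat.strong_induction_on with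
  | _ d IH =>
    intro m hm
    obtain ⟨m', rfl⟩ : ∃ m', m = m' + 1 := ⟨m - 1, by omega⟩
    rw [Function.iterate_succ_apply]
    have hΔ : fwdDiff (1:ℝ) (fun t : ℝ => t ^ d)
        = ∑ i ∈ range d, (d.choose i : ℝ) • (fun t : ℝ => t ^ i) := by
      funext t
      simp only [fwdDiff, Finset.sum_apply, Pi.smul_apply, smul_eq_mul]
      rw [add_pow, Finset.sum_range_succ]
      simp [mul_comm]
    rw [hΔ, fwdDiff_iter_finset_sum]
    apply Finset.sum_eq_zero
    intro i hi
    rw [fwdDiff_iter_const_smul, IH i (mem_range.mp hi) m' (by have := mem_range.mp hi; omega), smul_zero]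

lemma L2 (m d : ℕ) (hd : d < m) (x : ℝ) :
    ∑ k ∈ range (m + 1), (-1 : ℝ) ^ (m - k) * (m.choose k : ℝ) * (x + k) ^ d = 0 := by
  have h := fwdDiff_iter_eq_sum_shift (1:ℝ) (fun t : ℝ => t ^ d) m x
  rw [L1 d m hd] at h
  have : (0:ℝ) = ∑ k ∈ range (m + 1),
      ((-1 : ℤ) ^ (m - k) * (m.choose k : ℤ)) • (x + k • (1:ℝ)) ^ d := h
  rw [this]
  apply Finset.sum_congr rfl
  intro k _
  push_cast [zsmul_eq_mul]
  ring

lemma sgn (a b : ℕ) (h : b ≤ a) : (-1 : ℝ) ^ (b + a) = (-1) ^ (a - b) := by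
  have : b + a = (a - b) + 2 * b := by omega
  rw [this, pow_add, pow_mul, neg_one_sq, one_pow, mul_one]

lemma range_split (m : ℕ) (g : ℕ → ℝ) :
    ∑ k ∈ range (m + 1), g k = g 0 + ∑ k ∈ Icc 1 m, g k := by
  rw [Finset.sum_range_succ', ← Finset.Ico_add_one_right_eq_Icc, Finset.sum_Ico_eq_sum_range]
  simp [add_comm]

theorem abel0 (n : ℕ) (x y : ℝ) :
    y ^ n + ∑ k ∈ Icc 1 n, (n.choose k : ℝ) * x * (x + k) ^ (k - 1) * (y - k) ^ (n - k)
      = (x + y) ^ n := by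
  set F : ℕ → ℕ → ℝ := fun k j => if k + j ≤ n then
      (-1 : ℝ) ^ (n - j - k) * (n.choose j : ℝ) * ((n - j).choose k : ℝ) * (x + y) ^ j
        * x * (x + k) ^ (n - j - 1) else 0 with hF
  have hy : y ^ n = ∑ j ∈ range (n + 1),
      (-1 : ℝ) ^ (n - j) * (n.choose j : ℝ) * (x + y) ^ j * x ^ (n - j) := by
    have h := sub_pow (x + y) x n
    rw [show x + y - x = y by ring] at h
    rw [h]
    refine Finset.sum_congr rfl fun j hj => ?_
    rw [sgn n j (by simpa using Nat.lt_succ_iff.mp (mem_range.mp hj))]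
    ring
  have hterm : ∀ k ∈ Icc 1 n,
      (n.choose k : ℝ) * x * (x + k) ^ (k - 1) * (y - k) ^ (n - k)
        = ∑ j ∈ range (n + 1), F k j := by
    intro k hk
    obtain ⟨hk1, hkn⟩ := Finset.mem_Icc.mp hk
    rw [show (y - (k:ℝ)) = (x + y) - (x + k) by ring, sub_pow, Finset.mul_sum]
    refine (Finset.sum_congr rfl fun j hj => ?_).trans
      (Finset.sum_subset (Finset.range_subset_range.mpr (by omega)) ?_)
    case refine_2 =>
      intro j _ hj
      rw [hF]
      simp only [mem_range] at hj
      exact if_neg (by omega)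
    · have hjk : j + k ≤ n := by have := mem_range.mp hj; omega
      rw [hF]
      simp only
      rw [if_pos (by omega)]
      have hch : ((n - k).choose j : ℝ) * (n.choose k : ℝ)
          = (n.choose j : ℝ) * ((n - j).choose k : ℝ) := by
        have h1 : n.choose (k + j) * (k + j).choose k = n.choose k * (n - k).choose j := by
          have := Nat.choose_mul (n := n) (k := k + j) (s := k) (by omega)
          simpa [Nat.add_sub_cancel_left] using this
        have h2 : n.choose (k + j) * (k + j).choose j = n.choose j * (n - j).choose k := by
          have := Nat.choose_mul (n := n) (k := k + j) (s := j) (by omega)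
          simpa [Nat.add_sub_cancel] using this
        have h3 : (k + j).choose k = (k + j).choose j := by
          rw [← Nat.choose_symm (by omega : k ≤ k + j), Nat.add_sub_cancel_left]
        have h5 : n.choose k * (n - k).choose j = n.choose j * (n - j).choose k := by
          rw [← h1, h3, h2]
        have h4 : (n - k).choose j * n.choose k = n.choose j * (n - j).choose k := by
          rw [mul_comm]; exact h5
        exact_mod_cast congrArg (fun z : ℕ => (z : ℝ)) h4
      have hsg : (-1 : ℝ) ^ (j + (n - k)) = (-1 : ℝ) ^ (n - j - k) := by
        rw [sgn (n - k) j (by omega)]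
        congr 1
        omega
      have hpow : (x + k) ^ (k - 1) * (x + k) ^ (n - k - j) = (x + k) ^ (n - j - 1) := by
        rw [← pow_add]
        congr 1
        omega
      calc (n.choose k : ℝ) * x * (x + k) ^ (k - 1) *
            ((-1:ℝ) ^ (j + (n - k)) * (x + y) ^ j * (x + k) ^ (n - k - j) * ((n - k).choose j : ℝ))
          = ((-1:ℝ) ^ (j + (n-k))) * ((((n-k).choose j : ℝ)) * (n.choose k : ℝ)) * (x + y) ^ j * x *
            ((x + k) ^ (k - 1) * (x + k) ^ (n - k - j)) := by ring
        _ = _ := by rw [hsg, hch, hpow]; ring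
  rw [hy, Finset.sum_congr rfl hterm, Finset.sum_comm, ← Finset.sum_add_distrib]
  rw [Finset.sum_eq_single_of_mem n (self_mem_range_succ n)]
  · simp only [Nat.sub_self, pow_zero, Nat.choose_self, Nat.cast_one, one_mul, mul_one]
    rw [Finset.sum_eq_zero, add_zero]
    intro k hk
    rw [hF]
    exact if_neg (by have := (Finset.mem_Icc.mp hk).1; omega)
  · intro j hj hjn
    have hjlt : j < n := by have := mem_range.mp hj; omega
    set m := n - j with hm
    have hm1 : 1 ≤ m := by omega
    have hsum : ∑ k ∈ Icc 1 n, F k j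
        = ∑ k ∈ Icc 1 m, (-1:ℝ) ^ (m - k) * (n.choose j : ℝ) * ((m).choose k : ℝ)
            * (x + y) ^ j * x * (x + k) ^ (m - 1) := by
      rw [← Finset.sum_subset (Finset.Icc_subset_Icc_right (by omega : m ≤ n))]
      · exact Finset.sum_congr rfl fun k hk => by
          rw [hF]; exact if_pos (by have := (Finset.mem_Icc.mp hk).2; omega)
      · intro k hk hk2
        rw [hF]
        refine if_neg ?_
        simp only [Finset.mem_Icc] at hk hk2
        omega
    rw [hsum]
    have key := L2 m (m - 1) (by omega) x
    rw [range_split] at key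
    simp only [Nat.cast_zero, add_zero, Nat.choose_zero_right, Nat.cast_one, mul_one,
      Nat.sub_zero] at key
    have hfac : ∑ k ∈ Icc 1 m, (-1:ℝ) ^ (m - k) * (n.choose j : ℝ) * ((m).choose k : ℝ)
            * (x + y) ^ j * x * (x + k) ^ (m - 1)
        = (n.choose j : ℝ) * (x + y) ^ j * x *
          ∑ k ∈ Icc 1 m, (-1:ℝ) ^ (m - k) * ((m).choose k : ℝ) * (x + k) ^ (m - 1) := by
      rw [Finset.mul_sum]
      exact Finset.sum_congr rfl fun k _ => by ring
    rw [hfac]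
    have hrest : ∑ k ∈ Icc 1 m, (-1:ℝ) ^ (m - k) * ((m).choose k : ℝ) * (x + k) ^ (m - 1)
        = -((-1:ℝ) ^ m * x ^ (m - 1)) := by linarith [key]
    rw [hrest]
    have hx : x * x ^ (m - 1) = x ^ m := by
      rw [← pow_succ']
      congr 1
      omega
    calc (-1:ℝ) ^ (n - j) * (n.choose j:ℝ) * (x+y)^j * x ^ (n-j)
          + (n.choose j:ℝ) * (x+y)^j * x * -((-1:ℝ)^m * x^(m-1))
        = (-1:ℝ)^m * (n.choose j:ℝ) * (x+y)^j * x^m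
          - (-1:ℝ)^m * (n.choose j:ℝ)*(x+y)^j * (x * x^(m-1)) := by rw [← hm]; ring
      _ = 0 := by rw [hx]; ring

theorem abel_identity_m1_m1 (n : ℕ) (hn : 1 ≤ n) (x₁ x₂ : ℝ) :
    (x₁ + x₂) * (x₁ + x₂ + n) ^ (n - 1)
      = x₂ * (x₂ + n) ^ (n - 1) + x₁ * (x₁ + n) ^ (n - 1)
        + ∑ k ∈ Finset.Icc 1 (n - 1),
            (n.choose k : ℝ) * x₁ * x₂ * (x₁ + k) ^ (k - 1) * (x₂ + n - k) ^ (n - k - 1) := by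
  have hA := abel0 n x₁ (x₂ + n)
  have hB := abel0 (n - 1) x₁ (x₂ + n)
  have hsplit : ∀ k ∈ Icc 1 (n - 1),
      (n.choose k : ℝ) * x₁ * x₂ * (x₁ + k) ^ (k - 1) * (x₂ + n - k) ^ (n - k - 1)
        = (n.choose k : ℝ) * x₁ * (x₁ + k) ^ (k - 1) * (x₂ + (n:ℝ) - k) ^ (n - k)
          - (n:ℝ) * (((n - 1).choose k : ℝ) * x₁ * (x₁ + k) ^ (k - 1)
              * (x₂ + (n:ℝ) - k) ^ (n - 1 - k)) := by
    intro k hk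
    obtain ⟨h1, h2⟩ := mem_Icc.mp hk
    have hp : (x₂ + (n:ℝ) - k) ^ (n - k)
        = (x₂ + (n:ℝ) - k) * (x₂ + (n:ℝ) - k) ^ (n - k - 1) := by
      rw [← pow_succ']
      congr 1
      omega
    have he : n - 1 - k = n - k - 1 := by omega
    have hc : ((n:ℝ) - k) * (n.choose k : ℝ) = (n:ℝ) * ((n - 1).choose k : ℝ) := by
      have h := Nat.choose_mul_succ_eq (n - 1) k
      rw [show n - 1 + 1 = n by omega] at h
      have h' := congrArg (fun z : ℕ => (z : ℝ)) h
      push_cast [Nat.cast_sub (by omega : k ≤ n)] at h'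
      linarith
    rw [hp, he]
    linear_combination (-(x₁ * (x₁ + (k:ℝ)) ^ (k - 1) * (x₂ + (n:ℝ) - k) ^ (n - k - 1))) * hc
  rw [Finset.sum_congr rfl hsplit, Finset.sum_sub_distrib]
  have hIcc : Icc 1 n = insert n (Icc 1 (n - 1)) := by
    ext a
    simp only [mem_Icc, mem_insert]
    omega
  have hnot : n ∉ Icc 1 (n - 1) := by simp [mem_Icc]; omega
  have hAsum : ∑ k ∈ Icc 1 (n - 1),
      (n.choose k : ℝ) * x₁ * (x₁ + k) ^ (k - 1) * (x₂ + (n:ℝ) - k) ^ (n - k)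
      = (x₁ + (x₂ + n)) ^ n - (x₂ + (n:ℝ)) ^ n - x₁ * (x₁ + n) ^ (n - 1) := by
    rw [hIcc, Finset.sum_insert hnot] at hA
    have hn0 : (n.choose n : ℝ) * x₁ * (x₁ + n) ^ (n - 1) * (x₂ + (n:ℝ) - n) ^ (n - n)
        = x₁ * (x₁ + n) ^ (n - 1) := by
      simp [Nat.sub_self]
    rw [hn0] at hA
    linarith
  have hBsum : ∑ k ∈ Icc 1 (n - 1),
      (n:ℝ) * (((n - 1).choose k : ℝ) * x₁ * (x₁ + k) ^ (k - 1)
          * (x₂ + (n:ℝ) - k) ^ (n - 1 - k))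
      = (n:ℝ) * ((x₁ + (x₂ + n)) ^ (n - 1) - (x₂ + (n:ℝ)) ^ (n - 1)) := by
    rw [← Finset.mul_sum]
    congr 1
    linarith
  rw [hAsum, hBsum]
  have hRn : (x₁ + (x₂ + (n:ℝ))) ^ n = (x₁ + (x₂ + (n:ℝ))) * (x₁ + (x₂ + (n:ℝ))) ^ (n - 1) := by
    rw [← pow_succ']
    congr 1
    omega
  have hQn : (x₂ + (n:ℝ)) ^ n = (x₂ + (n:ℝ)) * (x₂ + (n:ℝ)) ^ (n - 1) := by
    rw [← pow_succ']
    congr 1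
    omega
  linear_combination hQn - hRn
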